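/- Let m ≥ 2, H ≤ Sym(m), and let G be a closed subgroup of the iterated wreath product W_H such that for every vertex v of the tree, hdim_G(rist_G(v)) ≥ m^{−l(v)}, where l(v) is the level of v. Then for every k ≥ 1 the rigid level stabilizer Rist_G(k) has Hausdorff dimension 1 in G: hdim_G(Rist_G(k)) = 1. -/

import Mathlib

open Filter Topology

/-- Vertices of the `m`-adic rooted tree: finite words over an alphabet of size `m`. -/
abbrev Vtx (m : ℕ) := List (Fin m)

/-- The iterated wreath product `W_H ≤ Aut T`: permutations `f` of the vertex set that fix
the root and such that at every vertex `v` there is a local permutation `σ ∈ H` with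
`f (v ++ [x]) = f v ++ [σ x]` for every letter `x`.  (This encodes exactly the automorphisms
of the `m`-adic tree whose local permutation at every vertex lies in `H`.) -/
def wreath (m : ℕ) (H : Subgroup (Equiv.Perm (Fin m))) : Subgroup (Equiv.Perm (Vtx m)) where
  carrier := {f | f [] = [] ∧
    ∀ v : Vtx m, ∃ σ ∈ H, ∀ x : Fin m, f (v ++ [x]) = f v ++ [σ x]}
  one_mem' := ⟨rfl, fun _ => ⟨1, H.one_mem, fun _ => rfl⟩⟩
  mul_mem' := by
    rintro f g ⟨hf0, hf⟩ ⟨hg0, hg⟩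
    refine ⟨?_, fun v => ?_⟩
    · show f (g []) = []
      rw [hg0, hf0]
    · obtain ⟨τ, hτ, hτ'⟩ := hg v
      obtain ⟨σ, hσ, hσ'⟩ := hf (g v)
      refine ⟨σ * τ, H.mul_mem hσ hτ, fun x => ?_⟩
      show f (g (v ++ [x])) = f (g v) ++ [σ (τ x)]
      rw [hτ' x, hσ' (τ x)]
  inv_mem' := by
    rintro f ⟨hf0, hf⟩
    refine ⟨?_, fun v => ?_⟩
    · calc (f⁻¹ : Equiv.Perm (Vtx m)) [] = f⁻¹ (f []) := by rw [hf0]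
        _ = [] := Equiv.symm_apply_apply f []
    · obtain ⟨σ, hσ, hσ'⟩ := hf (f⁻¹ v)
      refine ⟨σ⁻¹, H.inv_mem hσ, fun x => ?_⟩
      apply Equiv.injective f
      rw [hσ' (σ⁻¹ x)]
      simp only [Equiv.Perm.inv_def, Equiv.apply_symm_apply]

/-- The pointwise stabilizer (in the full permutation group of the vertex set)
of the vertices of the first `n` levels of the tree. -/
def levelStab (m n : ℕ) : Subgroup (Equiv.Perm (Vtx m)) :=
  ⨅ v ∈ {v : Vtx m | v.length ≤ n}, MulAction.stabilizer (Equiv.Perm (Vtx m)) v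

/-- The Hausdorff dimension of `X` in `G` with respect to the level-stabilizer filtration:
`hdimIn m G X = liminf_n log|X : St_X(n)| / log|G : St_G(n)|`. -/
noncomputable def hdimIn (m : ℕ) (G X : Subgroup (Equiv.Perm (Vtx m))) : ℝ :=
  Filter.liminf (fun n : ℕ =>
    Real.log ((levelStab m n).relIndex X) / Real.log ((levelStab m n).relIndex G)) Filter.atTop

/-- `X` has strong Hausdorff dimension `α` in `G` if the sequence
`log|X : St_X(n)| / log|G : St_G(n)|` converges to `α` (a proper limit). -/
def hasStrongHdim (m : ℕ) (G X : Subgroup (Equiv.Perm (Vtx m))) (α : ℝ) : Prop :=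
  Filter.Tendsto (fun n : ℕ =>
    Real.log ((levelStab m n).relIndex X) / Real.log ((levelStab m n).relIndex G))
    Filter.atTop (nhds α)

/-- The closure of a subgroup of `Aut T` in the profinite (congruence) topology:
`cl(G) = ⋂_n G · St(n)`. -/
def treeClosure (m : ℕ) (G : Subgroup (Equiv.Perm (Vtx m))) : Subgroup (Equiv.Perm (Vtx m)) :=
  ⨅ n : ℕ, G ⊔ levelStab m n

/-- A subgroup of `Aut T` is closed (in the profinite topology) iff it equals its closure. -/
def IsTreeClosed (m : ℕ) (G : Subgroup (Equiv.Perm (Vtx m))) : Prop :=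
  treeClosure m G = G

/-- `G` acts transitively on every level of the tree. -/
def LevelTransitive (m : ℕ) (G : Subgroup (Equiv.Perm (Vtx m))) : Prop :=
  ∀ u v : Vtx m, u.length = v.length → ∃ g ∈ G, g u = v

/-- `G` is self-similar: the section of any `g ∈ G` at any vertex `v` again belongs to `G`,
i.e. there is `h ∈ G` with `g (v ++ u) = g v ++ h u` for all words `u`. -/
def SelfSimilar (m : ℕ) (G : Subgroup (Equiv.Perm (Vtx m))) : Prop :=
  ∀ g ∈ G, ∀ v : Vtx m, ∃ h ∈ G, ∀ u : Vtx m, g (v ++ u) = g v ++ h u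

/-- The rigid vertex stabilizer of `v` in `G`: elements of `G` fixing `v` and every vertex
outside the subtree rooted at `v`. -/
def rist (m : ℕ) (G : Subgroup (Equiv.Perm (Vtx m))) (v : Vtx m) :
    Subgroup (Equiv.Perm (Vtx m)) :=
  G ⊓ ⨅ u ∈ {u : Vtx m | u = v ∨ ¬ v <+: u}, MulAction.stabilizer (Equiv.Perm (Vtx m)) u

/-- The rigid level stabilizer `Rist_G(n)`: the (internal direct) product of the rigid
vertex stabilizers of the vertices at level `n`, i.e. the subgroup they generate. -/
def RistL (m : ℕ) (G : Subgroup (Equiv.Perm (Vtx m))) (n : ℕ) :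
    Subgroup (Equiv.Perm (Vtx m)) :=
  ⨆ v ∈ {v : Vtx m | v.length = n}, rist m G v

/-- `N` is a normal subgroup of `G` (both given as subgroups of an ambient group). -/
def NormalIn {X : Type*} [Group X] (N G : Subgroup X) : Prop :=
  N ≤ G ∧ ∀ g ∈ G, ∀ x ∈ N, g * x * g⁻¹ ∈ N

/-- The rooted automorphism associated to `σ`: it permutes the first letter by `σ` and is
trivial elsewhere. -/
def rootedPerm (m : ℕ) (σ : Equiv.Perm (Fin m)) : Equiv.Perm (Vtx m) where
  toFun v := match v with
    | [] => []
    | x :: w => σ x :: w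
  invFun v := match v with
    | [] => []
    | x :: w => σ⁻¹ x :: w
  left_inv v := by cases v with
    | nil => rfl
    | cons x w => simp
  right_inv v := by cases v with
    | nil => rfl
    | cons x w => simp

/-- The embedding `H → W_H` by rooted automorphisms, as a group homomorphism. -/
def rootedHom (m : ℕ) : Equiv.Perm (Fin m) →* Equiv.Perm (Vtx m) where
  toFun := rootedPerm m
  map_one' := by
    ext v
    cases v <;> rfl
  map_mul' σ τ := by
    ext v
    cases v <;> rfl

/-- `D_m(K)`: the preimage under the first-level section map `ψ` of the diagonal copy
`{(k,…,k) : k ∈ K}`, i.e. those `f` fixing the first level whose section at every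
first-level vertex is one and the same element `k ∈ K`. -/
def diagSub (m : ℕ) (K : Subgroup (Equiv.Perm (Vtx m))) : Subgroup (Equiv.Perm (Vtx m)) where
  carrier := {f | f [] = [] ∧ ∃ k ∈ K, ∀ (x : Fin m) (u : Vtx m), f (x :: u) = x :: k u}
  one_mem' := ⟨rfl, 1, K.one_mem, fun _ _ => rfl⟩
  mul_mem' := by
    rintro f g ⟨hf0, kf, hkf, hf⟩ ⟨hg0, kg, hkg, hg⟩
    refine ⟨?_, kf * kg, K.mul_mem hkf hkg, fun x u => ?_⟩
    · show f (g []) = []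
      rw [hg0, hf0]
    · show f (g (x :: u)) = x :: kf (kg u)
      rw [hg x u, hf x (kg u)]
  inv_mem' := by
    rintro f ⟨hf0, k, hk, hf⟩
    refine ⟨?_, k⁻¹, K.inv_mem hk, fun x u => ?_⟩
    · calc (f⁻¹ : Equiv.Perm (Vtx m)) [] = f⁻¹ (f []) := by rw [hf0]
        _ = [] := Equiv.symm_apply_apply f []
    · apply Equiv.injective f
      rw [hf x (k⁻¹ u)]
      simp only [Equiv.Perm.inv_def, Equiv.apply_symm_apply]

/-- The group `G_K = ⟨H, D_m(K)⟩`, where `H` acts by rooted automorphisms. -/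
def diagGroup (m : ℕ) (H : Subgroup (Equiv.Perm (Fin m))) (K : Subgroup (Equiv.Perm (Vtx m))) :
    Subgroup (Equiv.Perm (Vtx m)) :=
  H.map (rootedHom m) ⊔ diagSub m K

/-- The center of a subgroup `G` of an ambient group, as a subgroup of the ambient group. -/
def centerOf {X : Type*} [Group X] (G : Subgroup X) : Subgroup X :=
  Subgroup.centralizer (G : Set X) ⊓ G

/-- The `G`-orbit of a vertex `v`. -/
def orbitSet (m : ℕ) (G : Subgroup (Equiv.Perm (Vtx m))) (v : Vtx m) : Set (Vtx m) :=
  {w | ∃ g ∈ G, g v = w}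

/-- The number of `G`-orbits on the `n`-th level of the tree. -/
noncomputable def numOrbits (m : ℕ) (G : Subgroup (Equiv.Perm (Vtx m))) (n : ℕ) : ℕ :=
  Nat.card {s : Set (Vtx m) // ∃ v : Vtx m, v.length = n ∧ s = orbitSet m G v}

namespace S16
variable {m : ℕ}

lemma mem_levelStab {n : ℕ} {f : Equiv.Perm (Vtx m)} :
    f ∈ levelStab m n ↔ ∀ u : Vtx m, u.length ≤ n → f u = u := by
  simp [levelStab, Subgroup.mem_iInf, MulAction.mem_stabilizer_iff, Equiv.Perm.smul_def,
    Set.mem_setOf_eq]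

lemma wreath_length {H : Subgroup (Equiv.Perm (Fin m))} {f : Equiv.Perm (Vtx m)}
    (hf : f ∈ wreath m H) : ∀ v : Vtx m, (f v).length = v.length := by
  intro v
  induction v using List.reverseRecOn with
  | nil => rw [hf.1]
  | append_singleton v x ih =>
      obtain ⟨σ, -, hσ⟩ := hf.2 v
      rw [hσ x]
      simp [ih]

lemma rist_fix {G : Subgroup (Equiv.Perm (Vtx m))} {v : Vtx m} {g : Equiv.Perm (Vtx m)}
    (hg : g ∈ rist m G v) {u : Vtx m} (hu : u = v ∨ ¬ v <+: u) : g u = u := by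
  have h2 := (Subgroup.mem_inf.mp hg).2
  simp only [Subgroup.mem_iInf] at h2
  simpa [MulAction.mem_stabilizer_iff, Equiv.Perm.smul_def] using h2 u hu

lemma rist_pref {G : Subgroup (Equiv.Perm (Vtx m))} {v : Vtx m} {g : Equiv.Perm (Vtx m)}
    (hg : g ∈ rist m G v) {u : Vtx m} (hu : v <+: u) : v <+: g u := by
  by_contra hnp
  have h1 : g⁻¹ (g u) = g u := rist_fix ((rist m G v).inv_mem hg) (Or.inr hnp)
  have h2 : g⁻¹ (g u) = u := Equiv.symm_apply_apply g u
  rw [h2] at h1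
  exact hnp (h1 ▸ hu)

lemma prefix_unique {v w u : Vtx m} (hv : v <+: u) (hw : w <+: u) (h : v.length = w.length) :
    v = w := by
  rw [List.prefix_iff_eq_take] at hv hw
  rw [hv, hw, h]

end S16

namespace S16

/-- Restriction of a permutation to the vertices of level at most `n`. -/
def resMap (m n : ℕ) (f : Equiv.Perm (Vtx m)) : {u : Vtx m // u.length ≤ n} → Vtx m :=
  fun u => f u.1

def resSet (m n : ℕ) (X : Subgroup (Equiv.Perm (Vtx m))) :
    Set ({u : Vtx m // u.length ≤ n} → Vtx m) :=
  resMap m n '' X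

instance fin_le (n : ℕ) : Finite {u : Vtx m // u.length ≤ n} :=
  (List.finite_length_le (Fin m) n).to_subtype

instance fin_eq (k : ℕ) : Finite {u : Vtx m // u.length = k} :=
  (List.finite_length_eq (Fin m) k).to_subtype

lemma relindex_eq_card (n : ℕ) (X : Subgroup (Equiv.Perm (Vtx m))) :
    (levelStab m n).relIndex X = Nat.card (resSet m n X) := by
  rw [Subgroup.relIndex, Subgroup.index]
  refine Nat.card_eq_of_bijective
    (fun c => Quotient.liftOn' c
      (fun x => (⟨resMap m n (x : Equiv.Perm (Vtx m)), x.1, x.2, rfl⟩ : resSet m n X)) ?_) ?_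
  · intro a b hab
    have h1 : (a : Equiv.Perm (Vtx m))⁻¹ * b ∈ levelStab m n := by
      have := QuotientGroup.leftRel_apply.mp hab
      simpa [Subgroup.mem_subgroupOf] using this
    rw [mem_levelStab] at h1
    apply Subtype.ext
    funext u
    show (a : Equiv.Perm (Vtx m)) u.1 = (b : Equiv.Perm (Vtx m)) u.1
    have h4 := h1 u.1 u.2
    simp only [Equiv.Perm.mul_apply] at h4
    conv_lhs => rw [← h4]
    exact Equiv.apply_symm_apply _ _
  · constructor
    · intro c d
      refine Quotient.inductionOn₂' c d ?_
      intro a b h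
      have h2 : resMap m n (a : Equiv.Perm (Vtx m)) = resMap m n b := congrArg Subtype.val h
      refine Quotient.sound' (QuotientGroup.leftRel_apply.mpr ?_)
      rw [Subgroup.mem_subgroupOf]
      simp only [Subgroup.coe_mul, Subgroup.coe_inv]
      rw [mem_levelStab]
      intro u hu
      have := congrFun h2 ⟨u, hu⟩
      simp only [resMap] at this
      simp only [Equiv.Perm.mul_apply]
      rw [← this, Equiv.Perm.inv_def, Equiv.symm_apply_apply]
    · rintro ⟨φ, x, hx, rfl⟩
      exact ⟨Quotient.mk'' ⟨x, hx⟩, rfl⟩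

lemma resSet_finite {H : Subgroup (Equiv.Perm (Fin m))} (n : ℕ)
    {X : Subgroup (Equiv.Perm (Vtx m))} (hX : X ≤ wreath m H) : (resSet m n X).Finite := by
  have hfin : (Set.univ.pi
      (fun _ : {u : Vtx m // u.length ≤ n} => {l : Vtx m | l.length ≤ n})).Finite :=
    Set.Finite.pi (fun _ => List.finite_length_le (Fin m) n)
  refine hfin.subset ?_
  rintro φ ⟨x, hx, rfl⟩
  intro u _
  simp only [Set.mem_setOf_eq, resMap]
  rw [wreath_length (hX hx)]
  exact u.2

lemma resSet_nonempty (n : ℕ) (X : Subgroup (Equiv.Perm (Vtx m))) :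
    (resSet m n X).Nonempty :=
  ⟨resMap m n 1, 1, X.one_mem, rfl⟩

lemma resSet_mono (n : ℕ) {X Y : Subgroup (Equiv.Perm (Vtx m))} (h : X ≤ Y) :
    resSet m n X ⊆ resSet m n Y := by
  rintro φ ⟨x, hx, rfl⟩
  exact ⟨x, h hx, rfl⟩

lemma relindex_ne_zero {H : Subgroup (Equiv.Perm (Fin m))} (n : ℕ)
    {X : Subgroup (Equiv.Perm (Vtx m))} (hX : X ≤ wreath m H) :
    (levelStab m n).relIndex X ≠ 0 := by
  rw [relindex_eq_card]
  have := (resSet_finite n hX).to_subtype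
  have := (resSet_nonempty n X).to_subtype
  exact Nat.card_pos.ne'

lemma relindex_le {H : Subgroup (Equiv.Perm (Fin m))} (n : ℕ)
    {X Y : Subgroup (Equiv.Perm (Vtx m))} (hXY : X ≤ Y) (hY : Y ≤ wreath m H) :
    (levelStab m n).relIndex X ≤ (levelStab m n).relIndex Y := by
  rw [relindex_eq_card, relindex_eq_card]
  exact Nat.card_mono (resSet_finite n hY) (resSet_mono n hXY)

end S16

namespace S16

lemma prod_eval {G : Subgroup (Equiv.Perm (Vtx m))} {k : ℕ}
    (l : List {v : Vtx m // v.length = k}) (hl : l.Nodup)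
    (g : {v : Vtx m // v.length = k} → Equiv.Perm (Vtx m))
    (hg : ∀ v, g v ∈ rist m G v.1) :
    (∀ u : Vtx m, (∀ v ∈ l, ¬ v.1 <+: u) → (l.map g).prod u = u) ∧
    (∀ (u : Vtx m) (v : {v : Vtx m // v.length = k}), v ∈ l → v.1 <+: u →
      (l.map g).prod u = g v u) := by
  induction l with
  | nil => simp
  | cons w t ih =>
    obtain ⟨hwt, htnd⟩ := List.nodup_cons.mp hl
    obtain ⟨ih1, ih2⟩ := ih htnd
    simp only [List.map_cons, List.prod_cons, Equiv.Perm.mul_apply]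
    constructor
    · intro u hu
      rw [ih1 u (fun v hv => hu v (List.mem_cons_of_mem w hv))]
      exact rist_fix (hg w) (Or.inr (hu w List.mem_cons_self))
    · intro u v hv hpre
      rcases List.mem_cons.mp hv with rfl | hvt
      · rw [ih1 u ?_]
        intro t' ht' hpre'
        have : t' = v := Subtype.ext (prefix_unique hpre' hpre (t'.2.trans v.2.symm))
        exact hwt (this ▸ ht')
      · rw [ih2 u v hvt hpre]
        refine rist_fix (hg w) (Or.inr ?_)
        intro hwpre
        have hvpre : v.1 <+: g v u := rist_pref (hg v) hpre
        have : w.1 = v.1 := prefix_unique hwpre hvpre (w.2.trans v.2.symm)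
        exact hwt (by rwa [Subtype.ext this])

lemma card_pi_le {H : Subgroup (Equiv.Perm (Fin m))} {G : Subgroup (Equiv.Perm (Vtx m))}
    (hGW : G ≤ wreath m H) (k n : ℕ) :
    Nat.card (∀ v : {v : Vtx m // v.length = k}, resSet m n (rist m G v.1))
      ≤ Nat.card (resSet m n (RistL m G k)) := by
  classical
  have hRG : RistL m G k ≤ G := by
    refine iSup₂_le fun v hv => inf_le_left
  have hfin : (resSet m n (RistL m G k)).Finite := resSet_finite n (hRG.trans hGW)
  have := hfin.to_subtype
  letI : Fintype {v : Vtx m // v.length = k} := Fintype.ofFinite _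
  set L : List {v : Vtx m // v.length = k} := Finset.univ.toList with hL
  have hLnd : L.Nodup := Finset.nodup_toList _
  have hLmem : ∀ v : {v : Vtx m // v.length = k}, v ∈ L := fun v => by
    rw [hL, Finset.mem_toList]; exact Finset.mem_univ v
  -- the combining injection
  have hchoice : ∀ (φ : ∀ v : {v : Vtx m // v.length = k}, resSet m n (rist m G v.1)) v,
      ∃ g : Equiv.Perm (Vtx m), g ∈ rist m G v.1 ∧ resMap m n g = (φ v).1 := by
    intro φ v
    obtain ⟨g, hg, hg'⟩ := (φ v).2
    exact ⟨g, hg, hg'⟩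
  choose gf hgf hgf' using hchoice
  have hmem : ∀ φ, (L.map (gf φ)).prod ∈ RistL m G k := by
    intro φ
    refine list_prod_mem ?_
    intro x hx
    obtain ⟨v, -, rfl⟩ := List.mem_map.mp hx
    have hle : rist m G v.1 ≤ RistL m G k := le_iSup₂ (f := fun v _ => rist m G v) v.1 v.2
    exact hle (hgf φ v)
  set F : (∀ v : {v : Vtx m // v.length = k}, resSet m n (rist m G v.1)) →
      resSet m n (RistL m G k) :=
    fun φ => ⟨resMap m n ((L.map (gf φ)).prod), (L.map (gf φ)).prod, hmem φ, rfl⟩ with hF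
  have hinj : Function.Injective F := by
    intro φ ψ hfψ
    have heq : resMap m n ((L.map (gf φ)).prod) = resMap m n ((L.map (gf ψ)).prod) :=
      congrArg Subtype.val hfψ
    funext v
    apply Subtype.ext
    rw [← hgf' φ v, ← hgf' ψ v]
    funext u
    by_cases hpre : v.1 <+: u.1
    · have e1 : (L.map (gf φ)).prod u.1 = gf φ v u.1 :=
        (prod_eval L hLnd (gf φ) (hgf φ)).2 u.1 v (hLmem v) hpre
      have e2 : (L.map (gf ψ)).prod u.1 = gf ψ v u.1 :=
        (prod_eval L hLnd (gf ψ) (hgf ψ)).2 u.1 v (hLmem v) hpre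
      have := congrFun heq u
      simp only [resMap] at this ⊢
      rw [← e1, ← e2]
      exact this
    · simp only [resMap]
      rw [rist_fix (hgf φ v) (Or.inr hpre), rist_fix (hgf ψ v) (Or.inr hpre)]
  exact Nat.card_le_card_of_injective F hinj

end S16

namespace S16

def lkEquiv (m k : ℕ) : {v : Vtx m // v.length = k} ≃ List.Vector (Fin m) k where
  toFun v := ⟨v.1, v.2⟩
  invFun v := ⟨v.1, v.2⟩
  left_inv _ := rfl
  right_inv _ := rfl

lemma card_lk (m k : ℕ) : Nat.card {v : Vtx m // v.length = k} = m ^ k := by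
  rw [Nat.card_congr (lkEquiv m k), Nat.card_eq_fintype_card, card_vector]
  simp

end S16

/-- Let `G ≤ W_H` be a closed subgroup such that
`hdim_G(rist_G(v)) ≥ m^{-l(v)}` for every vertex `v`.  Then every rigid level stabilizer
has Hausdorff dimension `1` in `G`: `hdim_G(Rist_G(k)) = 1` for every `k ≥ 1`. -/

theorem statement16 (m : ℕ) (hm : 2 ≤ m) (H : Subgroup (Equiv.Perm (Fin m)))
    (G : Subgroup (Equiv.Perm (Vtx m))) (hGW : G ≤ wreath m H) (hGcl : IsTreeClosed m G)
    (hrist : ∀ v : Vtx m, ((m : ℝ) ^ v.length)⁻¹ ≤ hdimIn m G (rist m G v)) :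
    ∀ k : ℕ, 1 ≤ k → hdimIn m G (RistL m G k) = 1 := by
  classical
  intro k _hk
  letI : Fintype {v : Vtx m // v.length = k} := Fintype.ofFinite _
  have hm0 : (0:ℝ) < (m:ℝ) := by
    have h2 : (0:ℕ) < m := lt_of_lt_of_le (by norm_num) hm
    exact_mod_cast h2
  have hmk : (0:ℝ) < (m:ℝ) ^ k := pow_pos hm0 k
  have hRG : RistL m G k ≤ G := iSup₂_le fun v hv => inf_le_left
  have hRW : RistL m G k ≤ wreath m H := hRG.trans hGW
  have hr1 : ∀ n, 1 ≤ (levelStab m n).relIndex G :=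
    fun n => Nat.one_le_iff_ne_zero.2 (S16.relindex_ne_zero n hGW)
  have ha1 : ∀ n, 1 ≤ (levelStab m n).relIndex (RistL m G k) :=
    fun n => Nat.one_le_iff_ne_zero.2 (S16.relindex_ne_zero n hRW)
  have har : ∀ n, (levelStab m n).relIndex (RistL m G k) ≤ (levelStab m n).relIndex G :=
    fun n => S16.relindex_le n hRG hGW
  set f : ℕ → ℝ := fun n =>
    Real.log ((levelStab m n).relIndex (RistL m G k)) / Real.log ((levelStab m n).relIndex G)
    with hfdef
  have hgoal : hdimIn m G (RistL m G k) = Filter.liminf f Filter.atTop := rfl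
  have hrl : ∀ n, (0:ℝ) ≤ Real.log ((levelStab m n).relIndex G) :=
    fun n => Real.log_natCast_nonneg _
  have hupper : ∀ n, f n ≤ 1 := by
    intro n
    refine div_le_one_of_le₀ ?_ (hrl n)
    exact Real.log_le_log (by exact_mod_cast ha1 n) (by exact_mod_cast har n)
  have hnonneg : ∀ n, 0 ≤ f n := fun n =>
    div_nonneg (Real.log_natCast_nonneg _) (hrl n)
  set gs : {v : Vtx m // v.length = k} → ℕ → ℝ := fun v n =>
    Real.log ((levelStab m n).relIndex (rist m G v.1)) / Real.log ((levelStab m n).relIndex G)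
    with hgs
  have hglim : ∀ v : {v : Vtx m // v.length = k},
      ((m:ℝ) ^ k)⁻¹ ≤ Filter.liminf (gs v) Filter.atTop := by
    intro v
    have h := hrist v.1
    rw [v.2] at h
    exact h
  have hgnonneg : ∀ v n, 0 ≤ gs v n := fun v n =>
    div_nonneg (Real.log_natCast_nonneg _) (hrl n)
  have hsum_le : ∀ n, (∑ v : {v : Vtx m // v.length = k}, gs v n) ≤ f n := by
    intro n
    have hρ1 : ∀ v : {v : Vtx m // v.length = k},
        1 ≤ (levelStab m n).relIndex (rist m G v.1) := fun v =>
      Nat.one_le_iff_ne_zero.2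
        (S16.relindex_ne_zero n ((inf_le_left : rist m G v.1 ≤ G).trans hGW))
    have hprod : (∏ v : {v : Vtx m // v.length = k},
        (levelStab m n).relIndex (rist m G v.1)) ≤ (levelStab m n).relIndex (RistL m G k) := by
      calc (∏ v : {v : Vtx m // v.length = k}, (levelStab m n).relIndex (rist m G v.1))
          = ∏ v : {v : Vtx m // v.length = k}, Nat.card (S16.resSet m n (rist m G v.1)) :=
            Finset.prod_congr rfl fun v _ => S16.relindex_eq_card n _
        _ = Nat.card (∀ v : {v : Vtx m // v.length = k}, S16.resSet m n (rist m G v.1)) :=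
            Nat.card_pi.symm
        _ ≤ Nat.card (S16.resSet m n (RistL m G k)) := S16.card_pi_le hGW k n
        _ = (levelStab m n).relIndex (RistL m G k) := (S16.relindex_eq_card n _).symm
    rcases (hrl n).eq_or_lt with h0 | hpos
    · have hz : ∀ v : {v : Vtx m // v.length = k}, gs v n = 0 := by
        intro v
        rw [hgs]
        simp [← h0]
      rw [hfdef]
      simp [← h0, hz]
    · have hprodpos : (0:ℝ) < ((∏ v : {v : Vtx m // v.length = k},
          (levelStab m n).relIndex (rist m G v.1) : ℕ) : ℝ) := by
        have : 1 ≤ ∏ v : {v : Vtx m // v.length = k},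
            (levelStab m n).relIndex (rist m G v.1) :=
          Finset.one_le_prod' fun v _ => hρ1 v
        exact_mod_cast lt_of_lt_of_le zero_lt_one (by exact_mod_cast this)
      have hlog : (∑ v : {v : Vtx m // v.length = k},
          Real.log ((levelStab m n).relIndex (rist m G v.1)))
          ≤ Real.log ((levelStab m n).relIndex (RistL m G k)) := by
        have hcastprod : ((∏ v : {v : Vtx m // v.length = k},
            (levelStab m n).relIndex (rist m G v.1) : ℕ) : ℝ)
            = ∏ v : {v : Vtx m // v.length = k},
              (((levelStab m n).relIndex (rist m G v.1) : ℕ) : ℝ) := by push_cast; rfl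
        have hlogprod : Real.log ((∏ v : {v : Vtx m // v.length = k},
            (levelStab m n).relIndex (rist m G v.1) : ℕ) : ℝ)
            = ∑ v : {v : Vtx m // v.length = k},
              Real.log ((levelStab m n).relIndex (rist m G v.1)) := by
          rw [hcastprod, Real.log_prod]
          intro v _
          have := hρ1 v
          have h1 : (1:ℝ) ≤ (((levelStab m n).relIndex (rist m G v.1) : ℕ) : ℝ) := by
            exact_mod_cast this
          linarith
        rw [← hlogprod]
        exact Real.log_le_log hprodpos (by exact_mod_cast hprod)
      rw [hgs, hfdef]
      rw [← Finset.sum_div]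
      exact div_le_div_of_nonneg_right hlog hpos.le
  have hbound_below : ∀ v, Filter.IsBoundedUnder (· ≥ ·) Filter.atTop (gs v) :=
    fun v => Filter.isBoundedUnder_of ⟨0, fun n => hgnonneg v n⟩
  have hcard : (Finset.univ : Finset {v : Vtx m // v.length = k}).card = m ^ k := by
    rw [Finset.card_univ, ← Nat.card_eq_fintype_card, S16.card_lk]
  have hge : (1:ℝ) ≤ Filter.liminf f Filter.atTop := by
    refine le_of_forall_sub_le ?_
    intro ε hε
    have hev : ∀ v : {v : Vtx m // v.length = k},
        ∀ᶠ n in Filter.atTop, ((m:ℝ)^k)⁻¹ - ε/(m:ℝ)^k < gs v n := by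
      intro v
      refine Filter.eventually_lt_of_lt_liminf ?_ (hbound_below v)
      have h := hglim v
      have : (0:ℝ) < ε/(m:ℝ)^k := div_pos hε hmk
      linarith
    have hev2 : ∀ᶠ n in Filter.atTop, ∀ v : {v : Vtx m // v.length = k},
        ((m:ℝ)^k)⁻¹ - ε/(m:ℝ)^k < gs v n :=
      Filter.eventually_all.mpr hev
    refine Filter.le_liminf_of_le ?_ ?_
    · exact Filter.IsBoundedUnder.isCoboundedUnder_ge
        ⟨1, Filter.eventually_map.2 (Filter.Eventually.of_forall hupper)⟩
    · refine hev2.mono ?_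
      intro n hn
      have h1 : (∑ _v : {v : Vtx m // v.length = k}, (((m:ℝ)^k)⁻¹ - ε/(m:ℝ)^k))
          ≤ ∑ v : {v : Vtx m // v.length = k}, gs v n :=
        Finset.sum_le_sum fun v _ => (hn v).le
      have h2 : (∑ _v : {v : Vtx m // v.length = k}, (((m:ℝ)^k)⁻¹ - ε/(m:ℝ)^k))
          = 1 - ε := by
        rw [Finset.sum_const, hcard, nsmul_eq_mul]
        push_cast
        field_simp
      calc (1:ℝ) - ε = _ := h2.symm
        _ ≤ ∑ v : {v : Vtx m // v.length = k}, gs v n := h1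
        _ ≤ f n := hsum_le n
  have hle : Filter.liminf f Filter.atTop ≤ 1 :=
    Filter.liminf_le_of_frequently_le (Filter.Frequently.of_forall hupper)
      (Filter.isBoundedUnder_of ⟨0, fun n => hnonneg n⟩)
  rw [hgoal]
  exact le_antisymm hle hge
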